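/- In the M-class caching problem with gᵢ, Lᵢ > 0, sorted so g₁L₁ > g₂L₂ ≥ … ≥ g_ML_M, and a > 0 fixed, there exists ε > 0 such that for all 0 < b < ε the optimal policy over the simplex is u* = (1,0,…,0), and the optimal missed cache rate equals g₁·exp(−L₁·b/(b+a)) + Σ_{i>1} gᵢ. -/

import Mathlib

open Finset Set

set_option maxHeartbeats 1000000 in
theorem stmt_12 (M : ℕ) (hM : 1 ≤ M) (g L : Fin M → ℝ) (a : ℝ)
    (hg : ∀ i, 0 < g i) (hL : ∀ i, 0 < L i) (ha : 0 < a)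
    (hsorted : ∀ i : Fin M, i ≠ ⟨0, hM⟩ → g i * L i < g ⟨0, hM⟩ * L ⟨0, hM⟩)
    (e : Fin M → ℝ) (he : ∀ i, e i = if i = ⟨0, hM⟩ then 1 else 0) :
    ∃ ε > 0, ∀ b : ℝ, 0 < b → b < ε →
      (∀ u ∈ {u : Fin M → ℝ | (∀ i, 0 ≤ u i) ∧ ∑ i, u i = 1}, u ≠ e →
        (∑ i, g i * Real.exp (-(L i * (b / (b + a)) * e i))) <
        (∑ i, g i * Real.exp (-(L i * (b / (b + a)) * u i)))) ∧
      (∑ i, g i * Real.exp (-(L i * (b / (b + a)) * e i))) =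
        g ⟨0, hM⟩ * Real.exp (-(L ⟨0, hM⟩ * b / (b + a))) +
          ∑ i ∈ Finset.univ.erase ⟨0, hM⟩, g i := by
  set i0 : Fin M := ⟨0, hM⟩ with hi0
  set G : ℝ := g i0 * L i0 with hG
  have hGpos : 0 < G := mul_pos (hg i0) (hL i0)
  set f : Fin M → ℝ := fun i => if i = i0 then 0 else g i * L i with hf
  have hne : (Finset.univ : Finset (Fin M)).Nonempty := ⟨i0, Finset.mem_univ _⟩
  set m : ℝ := Finset.univ.sup' hne f with hm
  have hm0 : 0 ≤ m := by
    have h : f i0 ≤ m := Finset.le_sup' f (Finset.mem_univ i0)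
    have h2 : f i0 = 0 := if_pos rfl
    linarith
  have hmG : m < G := by
    rw [hm, Finset.sup'_lt_iff]
    intro i _
    by_cases h : i = i0
    · simpa [hf, h] using hGpos
    · simpa [hf, h] using hsorted i h
  have hLpos := hL i0
  refine ⟨a * (G - m) / (G * L i0), div_pos (mul_pos ha (by linarith)) (by positivity), ?_⟩
  intro b hb hbe
  set t : ℝ := b / (b + a) with hT
  have hba : 0 < b + a := by linarith
  have htpos : 0 < t := div_pos hb hba
  -- key: m < G * (1 - L i0 * t) ≤ G * exp(-(L i0 * t))
  have ht2 : t < b / a := div_lt_div_of_pos_left hb ha (by linarith)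
  have ht3 : b / a < (G - m) / (G * L i0) := by
    rw [div_lt_div_iff₀ ha (by positivity)]
    nlinarith [mul_lt_mul_of_pos_right hbe (by positivity : (0:ℝ) < G * L i0),
      mul_div_cancel₀ (a * (G - m)) (by positivity : (G * L i0) ≠ 0)]
  have ht4 : t * (G * L i0) < G - m :=
    (lt_div_iff₀ (by positivity)).mp (ht2.trans ht3)
  have hkey : m < G * (1 - L i0 * t) := by nlinarith
  have hexpkey : m < G * Real.exp (-(L i0 * t)) := by
    have h1 := Real.add_one_le_exp (-(L i0 * t))
    nlinarith
  -- the value at e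
  have hEe : (∑ i, g i * Real.exp (-(L i * t * e i))) =
      g i0 * Real.exp (-(L i0 * t)) + ∑ i ∈ Finset.univ.erase i0, g i := by
    rw [← Finset.add_sum_erase _ _ (Finset.mem_univ i0)]
    congr 1
    · rw [he i0, if_pos rfl, mul_one]
    · exact Finset.sum_congr rfl fun i hi => by
        rw [he i, if_neg (Finset.ne_of_mem_erase hi)]; simp
  constructor
  · intro u hu hune
    obtain ⟨hu0, hu1⟩ := hu
    have hu0le : u i0 ≤ 1 := by
      rw [← hu1]
      exact Finset.single_le_sum (fun i _ => hu0 i) (Finset.mem_univ i0)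
    have husum : ∑ i ∈ Finset.univ.erase i0, u i = 1 - u i0 := by
      rw [← hu1, ← Finset.add_sum_erase Finset.univ u (Finset.mem_univ i0)]; ring
    have hult : u i0 < 1 := by
      rcases lt_or_eq_of_le hu0le with h | h
      · exact h
      · exfalso; apply hune; funext i
        rw [he i]
        by_cases hii : i = i0
        · rw [if_pos hii, hii, h]
        · rw [if_neg hii]
          have hz : ∑ j ∈ Finset.univ.erase i0, u j = 0 := by rw [husum, h]; ring
          exact (Finset.sum_eq_zero_iff_of_nonneg (fun j _ => hu0 j)).mp hz i
            (Finset.mem_erase.mpr ⟨hii, Finset.mem_univ i⟩)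
    have hdelta : 0 < 1 - u i0 := by linarith
    -- strict convexity bound for the i0 term
    have hA : g i0 * Real.exp (-(L i0 * t)) * (1 + L i0 * t * (1 - u i0)) <
        g i0 * Real.exp (-(L i0 * t * u i0)) := by
      have hx : L i0 * t * (1 - u i0) ≠ 0 := by positivity
      have h1 : L i0 * t * (1 - u i0) + 1 < Real.exp (L i0 * t * (1 - u i0)) :=
        Real.add_one_lt_exp hx
      have h2 : Real.exp (-(L i0 * t * u i0)) =
          Real.exp (-(L i0 * t)) * Real.exp (L i0 * t * (1 - u i0)) := by
        rw [← Real.exp_add]; congr 1; ring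
      rw [h2]
      nlinarith [mul_pos (hg i0) (Real.exp_pos (-(L i0 * t)))]
    -- linear bound for the other terms
    have hB : ∀ i ∈ Finset.univ.erase i0,
        g i - m * t * u i ≤ g i * Real.exp (-(L i * t * u i)) := by
      intro i hi
      have hle : g i * L i ≤ m := by
        have h : f i ≤ m := Finset.le_sup' f (Finset.mem_univ i)
        have h2 : f i = g i * L i := if_neg (Finset.ne_of_mem_erase hi)
        linarith
      have hexp := Real.add_one_le_exp (-(L i * t * u i))
      nlinarith [mul_le_mul_of_nonneg_left hexp (hg i).le,
        mul_le_mul_of_nonneg_right hle (mul_nonneg htpos.le (hu0 i)),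
        mul_nonneg (mul_nonneg htpos.le (hu0 i)) (hg i).le]
    have hBsum : (∑ i ∈ Finset.univ.erase i0, g i) - m * t * (1 - u i0) ≤
        ∑ i ∈ Finset.univ.erase i0, g i * Real.exp (-(L i * t * u i)) := by
      calc (∑ i ∈ Finset.univ.erase i0, g i) - m * t * (1 - u i0)
          = ∑ i ∈ Finset.univ.erase i0, (g i - m * t * u i) := by
            rw [Finset.sum_sub_distrib]
            congr 1
            rw [← husum, Finset.mul_sum]
        _ ≤ _ := Finset.sum_le_sum hB
    have hsplit_u : (∑ i, g i * Real.exp (-(L i * t * u i))) =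
        g i0 * Real.exp (-(L i0 * t * u i0)) +
          ∑ i ∈ Finset.univ.erase i0, g i * Real.exp (-(L i * t * u i)) :=
      (Finset.add_sum_erase _ _ (Finset.mem_univ i0)).symm
    rw [hEe, hsplit_u]
    have hsurplus : m * (t * (1 - u i0)) < G * Real.exp (-(L i0 * t)) * (t * (1 - u i0)) :=
      mul_lt_mul_of_pos_right hexpkey (mul_pos htpos hdelta)
    rw [hG] at hsurplus
    nlinarith [hA, hBsum, hsurplus]
  · rw [hEe]
    congr 2
    rw [mul_div_assoc]
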